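/- Let K be an admissible N×N real kernel and Y ~ DPP(K), i.e., P[Y = J] = (-1)^{|J̄|} det(K - 1_{J̄}) ≥ 0 for all J. Suppose the only (complex) eigenvalues of K are 0 and 1, with 1 having algebraic multiplicity p. Then |Y| = p almost surely, i.e., P[|Y| = p] = 1. -/

import Mathlib

open Matrix BigOperators

/-- Principal minor of `K` indexed by the subset `J`. -/
def pm {N : ℕ} (K : Matrix (Fin N) (Fin N) ℝ) (J : Finset (Fin N)) : ℝ :=
  (K.submatrix (fun i : J => (i : Fin N)) (fun j : J => (j : Fin N))).det

/-- Diagonal 0/1 matrix supported on `J`. -/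
def ind {N : ℕ} (J : Finset (Fin N)) : Matrix (Fin N) (Fin N) ℝ :=
  Matrix.diagonal (fun i => if i ∈ J then (1 : ℝ) else 0)

open Finset Polynomial in
/-- det of a matrix whose rows on `S` are standard basis vectors equals the
principal minor on `Sᶜ`. -/
lemma det_piecewise_single {N : ℕ} (A : Matrix (Fin N) (Fin N) ℝ) (S : Finset (Fin N)) :
    (Matrix.of (S.piecewise (fun i => Pi.single i (1 : ℝ)) (fun i => A i))).det = pm A Sᶜ := by
  classical
  set M : Matrix (Fin N) (Fin N) ℝ :=
    Matrix.of (S.piecewise (fun i => Pi.single i (1 : ℝ)) (fun i => A i)) with hM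
  let e : { x // x ∈ S } ⊕ { x // x ∈ Sᶜ } ≃ Fin N :=
    (Equiv.sumCongr (Equiv.refl _)
      (Equiv.subtypeEquivRight (fun x => (Finset.mem_compl (s := S) (a := x))))).trans
      (Equiv.sumCompl (· ∈ S))
  have hsub : M.submatrix e e =
      Matrix.fromBlocks 1 0
        (Matrix.of fun (i : {x // x ∈ Sᶜ}) (j : {x // x ∈ S}) => A i j)
        (A.submatrix (fun i : (Sᶜ : Finset (Fin N)) => (i : Fin N))
          (fun j : (Sᶜ : Finset (Fin N)) => (j : Fin N))) := by
    ext i j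
    rcases i with a | a <;> rcases j with b | b
    · have ha : (a : Fin N) ∈ S := a.2
      simp only [Matrix.submatrix_apply, hM, Matrix.of_apply, e, Equiv.trans_apply,
        Equiv.sumCongr_apply, Sum.map_inl, Equiv.refl_apply, Equiv.sumCompl_apply_inl,
        Matrix.fromBlocks_apply₁₁]
      rw [Finset.piecewise_eq_of_mem _ _ _ ha]
      rcases eq_or_ne a b with h | h
      · subst h; simp
      · have h' : (b : Fin N) ≠ (a : Fin N) := fun hc => h (Subtype.ext hc).symm
        simp [Pi.single_apply, h', Matrix.one_apply, h]
    · have ha : (a : Fin N) ∈ S := a.2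
      have hb : (b : Fin N) ∉ S := Finset.mem_compl.mp b.2
      simp only [Matrix.submatrix_apply, hM, Matrix.of_apply, e, Equiv.trans_apply,
        Equiv.sumCongr_apply, Sum.map_inl, Sum.map_inr, Equiv.refl_apply,
        Equiv.sumCompl_apply_inl, Equiv.sumCompl_apply_inr, Matrix.fromBlocks_apply₁₂,
        Equiv.subtypeEquivRight_apply_coe]
      rw [Finset.piecewise_eq_of_mem _ _ _ ha]
      have h' : (b : Fin N) ≠ (a : Fin N) := fun hc => hb (hc ▸ ha)
      simp [Pi.single_apply, h']
    · have ha : (a : Fin N) ∉ S := Finset.mem_compl.mp a.2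
      simp only [Matrix.submatrix_apply, hM, Matrix.of_apply, e, Equiv.trans_apply,
        Equiv.sumCongr_apply, Sum.map_inl, Sum.map_inr, Equiv.refl_apply,
        Equiv.sumCompl_apply_inl, Equiv.sumCompl_apply_inr, Matrix.fromBlocks_apply₂₁,
        Equiv.subtypeEquivRight_apply_coe]
      rw [Finset.piecewise_eq_of_notMem _ _ _ ha]
    · have ha : (a : Fin N) ∉ S := Finset.mem_compl.mp a.2
      simp only [Matrix.submatrix_apply, hM, Matrix.of_apply, e, Equiv.trans_apply,
        Equiv.sumCongr_apply, Sum.map_inr, Equiv.refl_apply,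
        Equiv.sumCompl_apply_inr, Matrix.fromBlocks_apply₂₂,
        Equiv.subtypeEquivRight_apply_coe]
      rw [Finset.piecewise_eq_of_notMem _ _ _ ha]
  calc M.det = (M.submatrix e e).det := (Matrix.det_submatrix_equiv_self e M).symm
    _ = pm A Sᶜ := by
        rw [hsub, Matrix.det_fromBlocks_zero₁₂, Matrix.det_one, one_mul]; rfl

open Finset in
/-- Multilinear expansion of `det (A + diagonal d)` over subsets of rows. -/
lemma det_add_diagonal {N : ℕ} (A : Matrix (Fin N) (Fin N) ℝ) (d : Fin N → ℝ) :
    (A + Matrix.diagonal d).det = ∑ S : Finset (Fin N), (∏ i ∈ S, d i) * pm A Sᶜ := by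
  classical
  have h0 : (A + Matrix.diagonal d).det = (Matrix.diagonal d + A).det := by rw [add_comm]
  rw [h0]
  have hexp := (Matrix.detRowAlternating (R := ℝ) (n := Fin N)).toMultilinearMap.map_add_univ
    (fun i => Matrix.diagonal d i) (fun i => A i)
  have h1 : (Matrix.diagonal d + A).det =
      ∑ S : Finset (Fin N),
        Matrix.detRowAlternating
          (S.piecewise (fun i => Matrix.diagonal d i) (fun i => A i)) := hexp
  rw [h1]
  refine Finset.sum_congr rfl fun S _ => ?_
  -- rewrite each term via map_piecewise_smul
  have hm : S.piecewise (fun i => Matrix.diagonal d i) (fun i => A i) =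
      S.piecewise (fun i => (S.piecewise d 1 i) • (S.piecewise (fun i => Pi.single i (1:ℝ)) (fun i => A i) i))
        (S.piecewise (fun i => Pi.single i (1:ℝ)) (fun i => A i)) := by
    ext i j
    by_cases h : i ∈ S
    · rw [Finset.piecewise_eq_of_mem _ _ _ h, Finset.piecewise_eq_of_mem _ _ _ h,
        Finset.piecewise_eq_of_mem _ _ _ h, Finset.piecewise_eq_of_mem _ _ _ h]
      rcases eq_or_ne i j with hij | hij
      · subst hij; simp [Matrix.diagonal_apply_eq]
      · simp [Matrix.diagonal_apply_ne _ hij, Pi.single_apply, hij.symm]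
    · simp [Finset.piecewise_eq_of_notMem _ _ _ h]
  rw [hm]
  have h2 : Matrix.detRowAlternating
        (S.piecewise (fun i => (S.piecewise d 1 i) •
            (S.piecewise (fun i => Pi.single i (1:ℝ)) (fun i => A i) i))
          (S.piecewise (fun i => Pi.single i (1:ℝ)) (fun i => A i)))
      = (∏ i ∈ S, S.piecewise d 1 i) •
          Matrix.detRowAlternating (S.piecewise (fun i => Pi.single i (1:ℝ)) (fun i => A i)) :=
    MultilinearMap.map_piecewise_smul
      (Matrix.detRowAlternating (R := ℝ) (n := Fin N)).toMultilinearMap _ _ S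
  have h3 : Matrix.detRowAlternating (S.piecewise (fun i => Pi.single i (1:ℝ)) (fun i => A i))
      = pm A Sᶜ := det_piecewise_single A S
  have hprod : (∏ i ∈ S, S.piecewise d 1 i) = ∏ i ∈ S, d i :=
    Finset.prod_congr rfl fun i hi => by rw [Finset.piecewise_eq_of_mem _ _ _ hi]
  rw [h2, h3, hprod, smul_eq_mul]

open Finset in
lemma pm_smul {N : ℕ} (c : ℝ) (A : Matrix (Fin N) (Fin N) ℝ) (T : Finset (Fin N)) :
    pm (c • A) T = c ^ T.card * pm A T := by
  unfold pm
  have : (c • A).submatrix (fun i : (T : Finset (Fin N)) => (i : Fin N))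
      (fun j : (T : Finset (Fin N)) => (j : Fin N))
      = c • (A.submatrix (fun i : (T : Finset (Fin N)) => (i : Fin N))
      (fun j : (T : Finset (Fin N)) => (j : Fin N))) := rfl
  rw [this, Matrix.det_smul, Fintype.card_coe]

open Finset Polynomial in
theorem stmt_12 {N p : ℕ} (hp : p ≤ N) (K : Matrix (Fin N) (Fin N) ℝ)
    (hadm : ∀ J : Finset (Fin N), 0 ≤ (-1 : ℝ) ^ J.card * (K - ind J).det)
    (hchar : K.charpoly = Polynomial.X ^ (N - p) * (Polynomial.X - 1) ^ p) :
    ∑ J ∈ Finset.univ.filter (fun J : Finset (Fin N) => J.card = p),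
      (-1 : ℝ) ^ (Jᶜ.card) * (K - ind Jᶜ).det = 1 := by
  classical
  set c : Finset (Fin N) → ℝ := fun J => (-1 : ℝ) ^ (Jᶜ.card) * (K - ind Jᶜ).det with hc
  -- Step A : expansion of c J in principal minors
  have stepA : ∀ J : Finset (Fin N),
      c J = ∑ T : Finset (Fin N),
        (if J ⊆ T then (-1 : ℝ) ^ ((T \ J).card) * pm K T else 0) := by
    intro J
    have hKi : K - ind Jᶜ = K + Matrix.diagonal (fun i => if i ∈ Jᶜ then (-1 : ℝ) else 0) := by
      ext i j
      rcases eq_or_ne i j with rfl | hij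
      · simp only [Matrix.sub_apply, Matrix.add_apply, ind, Matrix.diagonal_apply_eq]
        split_ifs <;> ring
      · simp [Matrix.sub_apply, Matrix.add_apply, ind, Matrix.diagonal_apply_ne _ hij]
    have hdet : (K - ind Jᶜ).det =
        ∑ S : Finset (Fin N),
          (∏ i ∈ S, (if i ∈ Jᶜ then (-1 : ℝ) else 0)) * pm K Sᶜ := by
      rw [hKi, det_add_diagonal]
    have hprod : ∀ S : Finset (Fin N),
        (∏ i ∈ S, (if i ∈ Jᶜ then (-1 : ℝ) else 0)) =
          (if S ⊆ Jᶜ then (-1 : ℝ) ^ S.card else 0) := by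
      intro S
      by_cases h : S ⊆ Jᶜ
      · rw [if_pos h]
        rw [Finset.prod_congr rfl (fun i hi => if_pos (h hi)), Finset.prod_const]
      · rw [if_neg h]
        obtain ⟨i, hiS, hiJ⟩ := Finset.not_subset.mp h
        exact Finset.prod_eq_zero hiS (if_neg hiJ)
    -- reindex S ↦ Sᶜ
    have hre : (∑ S : Finset (Fin N), (if S ⊆ Jᶜ then (-1 : ℝ) ^ S.card else 0) * pm K Sᶜ)
        = ∑ T : Finset (Fin N), (if Tᶜ ⊆ Jᶜ then (-1 : ℝ) ^ Tᶜ.card else 0) * pm K T := by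
      refine Fintype.sum_equiv (Function.Involutive.toPerm _ compl_compl) _ _ ?_
      intro S
      simp [Function.Involutive.toPerm]
    rw [hc]
    simp only [hdet, hprod, hre, Finset.mul_sum]
    refine Finset.sum_congr rfl fun T _ => ?_
    by_cases h : J ⊆ T
    · have h' : Tᶜ ⊆ Jᶜ := Finset.compl_subset_compl.mpr h
      rw [if_pos h', if_pos h]
      have hcard : Jᶜ.card = (T \ J).card + Tᶜ.card := by
        have hdis : Disjoint (T \ J) Tᶜ := by
          rw [Finset.disjoint_left]
          intro x hx hx'
          exact (Finset.mem_compl.mp hx') (Finset.mem_sdiff.mp hx).1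
        have hun : (T \ J) ∪ Tᶜ = Jᶜ := by
          ext x
          simp only [Finset.mem_union, Finset.mem_sdiff, Finset.mem_compl]
          constructor
          · rintro (⟨_, hxJ⟩ | hxT)
            · exact hxJ
            · exact fun hxJ => hxT (h hxJ)
          · intro hxJ
            by_cases hxT : x ∈ T
            · exact Or.inl ⟨hxT, hxJ⟩
            · exact Or.inr hxT
        rw [← hun, Finset.card_union_of_disjoint hdis]
      have hsq : ((-1:ℝ) ^ (Tᶜ.card)) * ((-1:ℝ) ^ (Tᶜ.card)) = 1 := by
        rw [← pow_add]; exact Even.neg_one_pow ⟨Tᶜ.card, rfl⟩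
      rw [hcard, pow_add]
      linear_combination ((-1:ℝ) ^ ((T \ J).card) * pm K T) * hsq
    · have h' : ¬ Tᶜ ⊆ Jᶜ := fun hcon => h (by
        have := Finset.compl_subset_compl.mpr hcon
        simpa using this)
      rw [if_neg h', if_neg h]
      ring
  -- the generating function
  set G : ℝ → ℝ := fun z => ∑ J : Finset (Fin N), c J * z ^ J.card with hG
  have stepB : ∀ z : ℝ, G z = ∑ T : Finset (Fin N), pm K T * (z - 1) ^ T.card := by
    intro z
    rw [hG]
    simp only [stepA, Finset.sum_mul]
    rw [Finset.sum_comm]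
    refine Finset.sum_congr rfl fun T _ => ?_
    have : ∀ J : Finset (Fin N),
        (if J ⊆ T then (-1 : ℝ) ^ ((T \ J).card) * pm K T else 0) * z ^ J.card
          = pm K T * (if J ∈ T.powerset then z ^ J.card * (-1 : ℝ) ^ ((T \ J).card) else 0) := by
      intro J
      by_cases h : J ⊆ T
      · rw [if_pos h, if_pos (Finset.mem_powerset.mpr h)]; ring
      · rw [if_neg h, if_neg (fun hcon => h (Finset.mem_powerset.mp hcon))]; ring
    simp only [this, ← Finset.mul_sum]
    congr 1
    rw [Finset.sum_ite_mem, Finset.univ_inter]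
    have hb := Finset.prod_add (fun _ : Fin N => z) (fun _ : Fin N => (-1 : ℝ)) T
    simp only [Finset.prod_const] at hb
    rw [← hb]
    ring_nf
  -- Step C : det side
  have stepC : ∀ z : ℝ,
      ((z - 1) • K + 1).det = ∑ T : Finset (Fin N), pm K T * (z - 1) ^ T.card := by
    intro z
    have h1 : ((z - 1) • K + 1) = ((z - 1) • K + Matrix.diagonal (fun _ => (1 : ℝ))) := by
      rw [Matrix.diagonal_one]
    rw [h1, det_add_diagonal]
    have hre : (∑ S : Finset (Fin N), (∏ _i ∈ S, (1:ℝ)) * pm ((z-1) • K) Sᶜ)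
        = ∑ T : Finset (Fin N), (∏ _i ∈ Tᶜ, (1:ℝ)) * pm ((z-1) • K) T := by
      refine Fintype.sum_equiv (Function.Involutive.toPerm _ compl_compl) _ _ ?_
      intro S
      simp [Function.Involutive.toPerm]
    rw [hre]
    refine Finset.sum_congr rfl fun T _ => ?_
    rw [pm_smul, Finset.prod_const_one, one_mul]
    ring
  -- Step D : charpoly evaluation
  have hceval : ∀ t : ℝ, (t • (1 : Matrix (Fin N) (Fin N) ℝ) - K).det
      = t ^ (N - p) * (t - 1) ^ p := by
    intro t
    have h1 : K.charpoly.eval t = (t • (1 : Matrix (Fin N) (Fin N) ℝ) - K).det := by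
      rw [Matrix.charpoly, _root_.eval_det, Matrix.matPolyEquiv_charmatrix]
      congr 1
      rw [eval_sub, eval_X, eval_C]
      congr 1
      simp [Matrix.scalar, Matrix.smul_one_eq_diagonal]
    rw [← h1, hchar]
    simp
  have stepD : ∀ z : ℝ, z ≠ 1 → ((z - 1) • K + 1).det = z ^ p := by
    intro z hz
    set u : ℝ := z - 1 with hu
    have hu0 : u ≠ 0 := sub_ne_zero.mpr hz
    have hw0 : -u ≠ 0 := neg_ne_zero.mpr hu0
    have hmat : u • K + 1 = (-u) • ((-u)⁻¹ • (1 : Matrix (Fin N) (Fin N) ℝ) - K) := by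
      rw [smul_sub, smul_smul, mul_inv_cancel₀ hw0, one_smul, neg_smul, sub_neg_eq_add,
        add_comm]
    rw [hmat, Matrix.det_smul, hceval, Fintype.card_fin]
    have hNe : (-u) ^ N = (-u) ^ (N - p) * (-u) ^ p := by
      rw [← pow_add, Nat.sub_add_cancel hp]
    rw [hNe]
    have h2 : (-u) ^ (N - p) * ((-u)⁻¹) ^ (N - p) = 1 := by
      rw [← mul_pow, mul_inv_cancel₀ hw0, one_pow]
    have h3 : (-u) ^ p * ((-u)⁻¹ - 1) ^ p = (1 + u) ^ p := by
      rw [← mul_pow]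
      congr 1
      field_simp
      ring
    calc (-u) ^ (N - p) * (-u) ^ p * (((-u)⁻¹) ^ (N - p) * ((-u)⁻¹ - 1) ^ p)
        = ((-u) ^ (N - p) * ((-u)⁻¹) ^ (N - p)) * ((-u) ^ p * ((-u)⁻¹ - 1) ^ p) := by ring
      _ = (1 + u) ^ p := by rw [h2, h3, one_mul]
      _ = z ^ p := by rw [hu]; ring_nf
  -- Step E : polynomial identification
  set P : Polynomial ℝ := ∑ J : Finset (Fin N), Polynomial.C (c J) * Polynomial.X ^ J.card
    with hP
  have hPeval : ∀ z : ℝ, P.eval z = G z := by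
    intro z
    rw [hP, hG]
    simp [Polynomial.eval_finset_sum]
  have hPX : P = Polynomial.X ^ p := by
    by_contra hne
    have hzero : P - Polynomial.X ^ p ≠ 0 := sub_ne_zero.mpr hne
    have hroots : {z : ℝ | z ≠ 1} ⊆ {z : ℝ | (P - Polynomial.X ^ p).IsRoot z} := by
      intro z hz
      simp only [Set.mem_setOf_eq, Polynomial.IsRoot, Polynomial.eval_sub,
        Polynomial.eval_pow, Polynomial.eval_X]
      rw [hPeval, stepB z, ← stepC z, stepD z hz, sub_self]
    have hinf : ({z : ℝ | z ≠ 1}).Infinite := by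
      have := (Set.finite_singleton (1 : ℝ)).infinite_compl
      simpa [Set.compl_singleton_eq] using this
    exact hzero (Polynomial.eq_zero_of_infinite_isRoot _ (hinf.mono hroots))
  -- extract coefficient p
  have hcoeff : P.coeff p = 1 := by rw [hPX]; simp
  rw [hP] at hcoeff
  rw [Polynomial.finset_sum_coeff] at hcoeff
  simp only [Polynomial.coeff_C_mul, Polynomial.coeff_X_pow] at hcoeff
  have hfinal : (∑ J ∈ Finset.univ.filter (fun J : Finset (Fin N) => J.card = p), c J) = 1 := by
    calc (∑ J ∈ Finset.univ.filter (fun J : Finset (Fin N) => J.card = p), c J)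
        = ∑ J : Finset (Fin N), c J * (if p = J.card then 1 else 0) := by
          rw [Finset.sum_filter]
          refine Finset.sum_congr rfl fun J _ => ?_
          by_cases h : J.card = p
          · rw [if_pos h, if_pos h.symm, mul_one]
          · rw [if_neg h, if_neg (fun hh => h hh.symm), mul_zero]
      _ = 1 := hcoeff
  simpa only [hc] using hfinal
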